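/- Let A ∈ M(n,ℤ) be invertible over ℚ defining a Calabi–Yau potential with charges q = A⁻¹e summing to 1, weight vector w = dq ∈ ℤ^n primitive (d the least common denominator of the charges), and let dᵀ be the least common denominator of the charges qᵀ = (Aᵀ)⁻¹e of the transposed potential. Then the order of SL(W) = {a ∈ A⁻¹ℤ^n/ℤ^n : Σᵢ aᵢ ∈ ℤ} equals |det(A)|/dᵀ. -/

import Mathlib

open Matrix QuotientAddGroup

noncomputable section

def IntLat (n : ℕ) : AddSubgroup (Fin n → ℚ) where
  carrier := {v | ∀ i, ∃ m : ℤ, v i = (m : ℚ)}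
  add_mem' := by
    intro a b ha hb i
    obtain ⟨p, hp⟩ := ha i
    obtain ⟨q, hq⟩ := hb i
    exact ⟨p + q, by simp [hp, hq]⟩
  zero_mem' := fun i => ⟨0, by simp⟩
  neg_mem' := by
    intro a ha i
    obtain ⟨p, hp⟩ := ha i
    exact ⟨-p, by simp [hp]⟩

abbrev QuotLat (n : ℕ) := (Fin n → ℚ) ⧸ IntLat n

def ratMat {n : ℕ} (A : Matrix (Fin n) (Fin n) ℤ) : Matrix (Fin n) (Fin n) ℚ :=
  A.map ((↑) : ℤ → ℚ)

def AutW {n : ℕ} (A : Matrix (Fin n) (Fin n) ℤ) : AddSubgroup (QuotLat n) :=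
  (AddSubgroup.comap (ratMat A).mulVecLin.toAddMonoidHom (IntLat n)).map
    (QuotientAddGroup.mk' (IntLat n))

def ZinQ : AddSubgroup ℚ := (Int.castAddHom ℚ).range

def sumHom (n : ℕ) : (Fin n → ℚ) →+ ℚ :=
  AddMonoidHom.mk' (fun v => ∑ i, v i) (by
    intro a b
    simpa using Finset.sum_add_distrib)

def qsum (n : ℕ) : QuotLat n →+ ℚ ⧸ ZinQ :=
  QuotientAddGroup.lift (IntLat n) ((QuotientAddGroup.mk' ZinQ).comp (sumHom n)) (by
    intro v hv
    have hv' : ∀ i, ∃ m : ℤ, v i = (m : ℚ) := hv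
    choose m hm using hv'
    have hmem : (∑ i, v i) ∈ ZinQ := ⟨∑ i, m i, by push_cast [hm]; simp⟩
    simpa [sumHom] using (QuotientAddGroup.eq_zero_iff _).mpr hmem)

def SLW {n : ℕ} (A : Matrix (Fin n) (Fin n) ℤ) : AddSubgroup (QuotLat n) :=
  AutW A ⊓ (qsum n).ker

def WellFormedWeights {n : ℕ} (w : Fin n → ℤ) (d : ℤ) : Prop :=
  (∀ i, Finset.gcd (Finset.univ.erase i) w = 1) ∧
  ∀ i j, i ≠ j → ((Finset.gcd ((Finset.univ.erase i).erase j) w) ∣ d)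


-- ===== auxiliary material =====

lemma bezout_aux {k : ℕ} (w : Fin k → ℤ) (hw : Finset.univ.gcd w = 1) :
    ∃ m : Fin k → ℤ, ∑ i, m i * w i = 1 := by
  classical
  have h1 : (1 : ℤ) ∈ Submodule.span ℤ (Set.range w) := by
    obtain ⟨g, hg⟩ := (IsPrincipalIdealRing.principal
      (Ideal.span (Set.range w) : Ideal ℤ)).principal
    have hdvd : ∀ i, g ∣ w i := by
      intro i
      have : w i ∈ Ideal.span (Set.range w) := Ideal.subset_span ⟨i, rfl⟩
      rw [hg, Ideal.submodule_span_eq, Ideal.mem_span_singleton] at this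
      exact this
    have hg1 : g ∣ 1 := by
      rw [← hw]
      exact Finset.dvd_gcd fun i _ => hdvd i
    have : IsUnit g := isUnit_of_dvd_one hg1
    have htop : Ideal.span (Set.range w) = ⊤ := by
      rw [hg, Ideal.submodule_span_eq, Ideal.span_singleton_eq_top]
      exact this
    rw [Ideal.submodule_span_eq, htop]
    trivial
  rw [Submodule.mem_span_range_iff_exists_fun] at h1
  obtain ⟨c, hc⟩ := h1
  exact ⟨c, by simpa [smul_eq_mul] using hc⟩

lemma mulVecLin_int_injective {k : ℕ} (A : Matrix (Fin k) (Fin k) ℤ) (hA : A.det ≠ 0) :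
    Function.Injective A.mulVecLin := by
  rw [injective_iff_map_eq_zero]
  intro v hv
  have h0 : A.mulVec v = 0 := hv
  have h1 : A.det • v = 0 := by
    have := congrArg (fun u => A.adjugate *ᵥ u) h0
    simpa [Matrix.mulVec_mulVec, Matrix.adjugate_mul, Matrix.smul_mulVec,
      Matrix.one_mulVec] using this
  funext i
  have := congrFun h1 i
  simp only [Pi.smul_apply, smul_eq_mul, Pi.zero_apply] at this
  exact (mul_eq_zero.mp this).resolve_left hA

lemma index_range_mulVecLin {k : ℕ} (A : Matrix (Fin k) (Fin k) ℤ) (hA : A.det ≠ 0) :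
    (LinearMap.range A.mulVecLin).toAddSubgroup.index = A.det.natAbs := by
  classical
  set N := LinearMap.range A.mulVecLin with hN
  obtain ⟨m, snf⟩ := N.smithNormalForm (Pi.basisFun ℤ (Fin k))
  obtain ⟨bM, bN, f, a, hsnf⟩ := snf
  have hm : m = k := by
    have e : (Fin k → ℤ) ≃ₗ[ℤ] N := LinearEquiv.ofInjective A.mulVecLin
      (mulVecLin_int_injective A hA)
    have h1 : Module.finrank ℤ N = m := by
      rw [Module.finrank_eq_card_basis bN, Fintype.card_fin]
    have h2 : Module.finrank ℤ N = k := by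
      rw [← e.finrank_eq]
      simp
    omega
  subst hm
  have hidx := (⟨bM, bN, f, a, hsnf⟩ :
    Module.Basis.SmithNormalForm N (Fin m) m).toAddSubgroup_index_eq_pow_mul_prod
  simp only [Fintype.card_fin, Nat.sub_self, pow_zero, one_mul] at hidx
  rw [hidx]
  have hidx2 : ∀ i : Fin m, (Submodule.toAddSubgroup (Ideal.span {a i})).index = (a i).natAbs := by
    intro i
    rw [Ideal.span_singleton_toAddSubgroup_eq_zmultiples, Int.index_zmultiples]
  let B : Matrix (Fin m) (Fin m) ℤ := Matrix.of fun r i => (bN i : Fin m → ℤ) r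
  have hPex : ∀ i, ∃ v, A.mulVec v = (bN i : Fin m → ℤ) := fun i => (bN i).2
  choose p hp using hPex
  let P : Matrix (Fin m) (Fin m) ℤ := Matrix.of fun r i => p i r
  have hAP : A * P = B := by
    ext r i
    rw [Matrix.mul_apply]
    have := congrFun (hp i) r
    simpa [Matrix.mulVec, dotProduct, P, B] using this
  have hmemA : ∀ j, A.mulVec (Pi.single j 1) ∈ N := fun j => ⟨Pi.single j 1, rfl⟩
  let Q : Matrix (Fin m) (Fin m) ℤ :=
    Matrix.of fun i j => bN.repr ⟨A.mulVec (Pi.single j 1), hmemA j⟩ i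
  have hBQ : B * Q = A := by
    ext r j
    rw [Matrix.mul_apply]
    have hsum := bN.sum_repr ⟨A.mulVec (Pi.single j 1), hmemA j⟩
    have h2 := congrFun (congrArg (Subtype.val) hsum) r
    simp only [AddSubmonoidClass.coe_finset_sum, Finset.sum_apply, SetLike.val_smul,
      Pi.smul_apply, smul_eq_mul] at h2
    rw [show A r j = A.mulVec (Pi.single j 1) r by simp [Matrix.mulVec_single]]
    rw [← h2]
    apply Finset.sum_congr rfl
    intro i _
    simp [B, Q, mul_comm]
  have hd1 : A.det = B.det * Q.det := by rw [← hBQ, Matrix.det_mul]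
  have hd2 : B.det = A.det * P.det := by rw [← hAP, Matrix.det_mul]
  have hPQ : P.det * Q.det = 1 := by
    have h3 : A.det * (P.det * Q.det) = A.det * 1 := by
      rw [mul_one]
      calc A.det * (P.det * Q.det) = (A.det * P.det) * Q.det := by ring
      _ = B.det * Q.det := by rw [← hd2]
      _ = A.det := hd1.symm
    exact mul_left_cancel₀ hA h3
  have hPunit : P.det.natAbs = 1 :=
    Int.isUnit_iff_natAbs_eq.mp (IsUnit.of_mul_eq_one _ hPQ)
  have hfbij : Function.Bijective f := by
    rw [Fintype.bijective_iff_injective_and_card]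
    exact ⟨f.injective, rfl⟩
  let σ : Equiv.Perm (Fin m) := Equiv.ofBijective f hfbij
  let M1 : Matrix (Fin m) (Fin m) ℤ := Matrix.of fun r i => bM (σ i) r
  have hBfact : B = Matrix.of fun r i => a i * M1 r i := by
    ext r i
    have := congrFun (hsnf i) r
    simpa [B, M1, σ, Equiv.ofBijective_apply] using this
  have hdetB : B.det = (∏ i, a i) * M1.det := by rw [hBfact, Matrix.det_mul_row]
  have hM1unit : M1.det.natAbs = 1 := by
    let T := (Pi.basisFun ℤ (Fin m)).toMatrix bM
    have hTunit : IsUnit T.det := by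
      letI := Module.Basis.invertibleToMatrix (Pi.basisFun ℤ (Fin m)) bM
      exact Matrix.isUnit_det_of_invertible T
    have hM1T : M1 = T.submatrix id σ := by
      ext r i
      simp [M1, T, Module.Basis.toMatrix_apply]
    have hdM1 : M1.det = ((Equiv.Perm.sign σ : ℤˣ) : ℤ) * T.det := by
      rw [hM1T, Matrix.det_permute']
      norm_cast
    have : IsUnit M1.det := by
      rw [hdM1]
      exact (Equiv.Perm.sign σ).isUnit.mul hTunit
    exact Int.isUnit_iff_natAbs_eq.mp this
  have hcomb : B.det.natAbs = A.det.natAbs := by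
    rw [hd2, Int.natAbs_mul, hPunit, mul_one]
  have hcomb2 : B.det.natAbs = ∏ i, (a i).natAbs := by
    rw [hdetB, Int.natAbs_mul, hM1unit, mul_one]
    exact map_prod Int.natAbsHom a Finset.univ
  calc ∏ x : Fin m, (Submodule.toAddSubgroup (Ideal.span {a x})).index
      = ∏ i, (a i).natAbs := Finset.prod_congr rfl fun i _ => hidx2 i
    _ = A.det.natAbs := by rw [← hcomb2, hcomb]

def castV {k : ℕ} (v : Fin k → ℤ) : Fin k → ℚ := fun i => (v i : ℚ)

lemma castV_add {k : ℕ} (a b : Fin k → ℤ) : castV (a + b) = castV a + castV b := by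
  funext i
  simp [castV]

lemma castV_inj {k : ℕ} : Function.Injective (castV (k := k)) := by
  intro a b hab
  funext i
  have := congrFun hab i
  simp only [castV] at this
  exact_mod_cast this

lemma ratMat_mulVec_castV {k : ℕ} (A : Matrix (Fin k) (Fin k) ℤ) (v : Fin k → ℤ) :
    (ratMat A).mulVec (castV v) = castV (A.mulVec v) := by
  funext i
  simp only [Matrix.mulVec, dotProduct, ratMat, Matrix.map_apply, castV]
  push_cast
  rfl

def gmap {k : ℕ} (A : Matrix (Fin k) (Fin k) ℤ) : (Fin k → ℤ) →+ QuotLat k :=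
  AddMonoidHom.mk' (fun v => QuotientAddGroup.mk' (IntLat k) ((ratMat A)⁻¹.mulVec (castV v)))
    (by
      intro a b
      show QuotientAddGroup.mk' (IntLat k) ((ratMat A)⁻¹.mulVec (castV (a + b))) = _
      rw [castV_add, Matrix.mulVec_add, map_add])

lemma gmap_apply {k : ℕ} (A : Matrix (Fin k) (Fin k) ℤ) (v : Fin k → ℤ) :
    gmap A v = QuotientAddGroup.mk' (IntLat k) ((ratMat A)⁻¹.mulVec (castV v)) := rfl

/-- |SL(W)| = |det A| / dᵀ, where dᵀ is the least common
denominator of the charges of the transposed potential. -/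
theorem stmt_16 (n : ℕ) (A : Matrix (Fin n) (Fin n) ℤ) (hA : A.det ≠ 0)
    (q : Fin n → ℚ) (hqdef : q = (ratMat A)⁻¹.mulVec 1)
    (hq1 : ∑ i, q i = 1)
    (d : ℕ) (hd : 0 < d) (w : Fin n → ℤ)
    (hw : ∀ i, (w i : ℚ) = (d : ℚ) * q i)
    (hprim : Finset.univ.gcd w = 1)
    (qT : Fin n → ℚ) (hqTdef : qT = (ratMat Aᵀ)⁻¹.mulVec 1)
    (dT : ℕ) (hdT : 0 < dT) (wT : Fin n → ℤ)
    (hwT : ∀ i, (wT i : ℚ) = (dT : ℚ) * qT i)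
    (hprimT : Finset.univ.gcd wT = 1) :
    Nat.card (SLW A) = A.det.natAbs / dT := by
  classical
  have hRAdet : (ratMat A).det = (A.det : ℚ) := ((Int.castRingHom ℚ).map_det A).symm
  have hRAdet0 : (ratMat A).det ≠ 0 := by
    rw [hRAdet]
    exact_mod_cast hA
  have hRAunit : IsUnit (ratMat A).det := isUnit_iff_ne_zero.mpr hRAdet0
  have hRAinv : ∀ x : Fin n → ℚ, (ratMat A).mulVec ((ratMat A)⁻¹.mulVec x) = x := by
    intro x
    rw [Matrix.mulVec_mulVec, Matrix.mul_nonsing_inv _ hRAunit, Matrix.one_mulVec]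
  have hRAinv' : ∀ x : Fin n → ℚ, (ratMat A)⁻¹.mulVec ((ratMat A).mulVec x) = x := by
    intro x
    rw [Matrix.mulVec_mulVec, Matrix.nonsing_inv_mul _ hRAunit, Matrix.one_mulVec]
  set g := gmap A with hg
  -- kernel of g
  have hkerg : g.ker = (LinearMap.range A.mulVecLin).toAddSubgroup := by
    ext v
    rw [AddMonoidHom.mem_ker]
    have hmk : g v = 0 ↔ (ratMat A)⁻¹.mulVec (castV v) ∈ IntLat n := by
      rw [hg, gmap_apply]
      simpa using QuotientAddGroup.eq_zero_iff ((ratMat A)⁻¹.mulVec (castV v))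
    rw [hmk]
    constructor
    · intro hmem
      choose u hu using hmem
      have hcu : castV u = (ratMat A)⁻¹.mulVec (castV v) := by
        funext i
        exact (hu i).symm
      refine ⟨u, castV_inj ?_⟩
      rw [show A.mulVecLin u = A.mulVec u from rfl, ← ratMat_mulVec_castV, hcu, hRAinv]
    · rintro ⟨u, rfl⟩
      intro i
      refine ⟨u i, ?_⟩
      rw [show (A.mulVecLin u : Fin n → ℤ) = A.mulVec u from rfl, ← ratMat_mulVec_castV, hRAinv']
      rfl
  -- range of g
  have hrangeg : g.range = AutW A := by
    ext x
    constructor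
    · rintro ⟨v, rfl⟩
      refine AddSubgroup.mem_map.mpr ⟨(ratMat A)⁻¹.mulVec (castV v), ?_, rfl⟩
      refine AddSubgroup.mem_comap.mpr ?_
      show (ratMat A).mulVec ((ratMat A)⁻¹.mulVec (castV v)) ∈ IntLat n
      rw [hRAinv]
      exact fun i => ⟨v i, rfl⟩
    · intro hx
      obtain ⟨y, hy, hyx⟩ := AddSubgroup.mem_map.mp hx
      have hy' : (ratMat A).mulVec y ∈ IntLat n := AddSubgroup.mem_comap.mp hy
      choose u hu using hy'
      have hcu : castV u = (ratMat A).mulVec y := by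
        funext i
        exact (hu i).symm
      refine ⟨u, ?_⟩
      rw [hg, gmap_apply, hcu, hRAinv']
      exact hyx
  -- cardinality of AutW
  have hcardAutW : Nat.card (AutW A) = A.det.natAbs := by
    have h2 := Nat.card_congr (QuotientAddGroup.quotientKerEquivRange g).toEquiv
    rw [← hrangeg, ← h2, ← AddSubgroup.index_eq_card, hkerg, index_range_mulVecLin A hA]
  -- the generator of the image of the sum map
  have hdTQ : (dT : ℚ) ≠ 0 := by
    exact_mod_cast hdT.ne'
  set x₀ : ℚ ⧸ ZinQ := QuotientAddGroup.mk' ZinQ ((dT : ℚ)⁻¹) with hx₀def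
  have hqTj : ∀ j, qT j = (wT j : ℚ) * (dT : ℚ)⁻¹ := by
    intro j
    rw [hwT j]
    field_simp
  -- sum formula
  have hsumg : ∀ v : Fin n → ℤ, qsum n (g v) = (∑ j, v j * wT j) • x₀ := by
    intro v
    have h0 : qsum n (g v) =
        QuotientAddGroup.mk' ZinQ (∑ i, ((ratMat A)⁻¹.mulVec (castV v)) i) := rfl
    have h1 : ∑ i, ((ratMat A)⁻¹.mulVec (castV v)) i = ∑ j, qT j * (castV v j) := by
      have e1 : ∑ i, ((ratMat A)⁻¹.mulVec (castV v)) i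
          = dotProduct 1 ((ratMat A)⁻¹.mulVec (castV v)) := by
        simp [dotProduct]
      have e2 : Matrix.vecMul 1 (ratMat A)⁻¹ = qT := by
        rw [hqTdef]
        have : ratMat Aᵀ = (ratMat A)ᵀ := rfl
        rw [this, ← Matrix.transpose_nonsing_inv, Matrix.mulVec_transpose]
      rw [e1, dotProduct_mulVec, e2]
      rfl
    have h2 : ∑ j, qT j * (castV v j) = ((∑ j, v j * wT j : ℤ) : ℚ) * (dT : ℚ)⁻¹ := by
      push_cast
      rw [Finset.sum_mul]
      apply Finset.sum_congr rfl
      intro j _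
      rw [hqTj j]
      simp [castV]
      ring
    rw [h0, h1, h2]
    rw [show ((∑ j, v j * wT j : ℤ) : ℚ) * (dT : ℚ)⁻¹
      = (∑ j, v j * wT j : ℤ) • ((dT : ℚ)⁻¹) by rw [zsmul_eq_mul]]
    rw [map_zsmul]
  set φ := (qsum n).comp (AutW A).subtype with hφ
  -- range of φ
  have hrangeφ : φ.range = AddSubgroup.zmultiples x₀ := by
    apply le_antisymm
    · rintro _ ⟨⟨x, hx⟩, rfl⟩
      rw [← hrangeg] at hx
      obtain ⟨v, hv⟩ := hx
      have : φ ⟨x, by rw [← hrangeg]; exact ⟨v, hv⟩⟩ = qsum n x := rfl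
      show φ _ ∈ _
      rw [this, ← hv, hsumg]
      exact AddSubgroup.zsmul_mem _ (AddSubgroup.mem_zmultiples x₀) _
    · intro y hy
      obtain ⟨z, rfl⟩ := AddSubgroup.mem_zmultiples_iff.mp hy
      obtain ⟨mv, hmv⟩ := bezout_aux wT hprimT
      have hmem : g mv ∈ AutW A := by
        rw [← hrangeg]
        exact ⟨mv, rfl⟩
      have hφm : φ ⟨g mv, hmem⟩ = x₀ := by
        have : φ ⟨g mv, hmem⟩ = qsum n (g mv) := rfl
        rw [this, hsumg, hmv, one_zsmul]
      exact ⟨z • ⟨g mv, hmem⟩, by rw [map_zsmul, hφm]⟩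
  -- order of x₀
  have hordx₀ : addOrderOf x₀ = dT := by
    rw [addOrderOf_eq_iff hdT]
    constructor
    · have h1 : dT • ((dT : ℚ)⁻¹) = ((1 : ℤ) : ℚ) := by
        simp [nsmul_eq_mul, hdTQ]
      rw [hx₀def, ← map_nsmul, h1]
      exact (QuotientAddGroup.eq_zero_iff _).mpr ⟨1, by norm_num⟩
    · intro m hmlt hmpos h0
      rw [hx₀def, ← map_nsmul] at h0
      have hmem : (m • ((dT : ℚ)⁻¹)) ∈ ZinQ := by
        exact (QuotientAddGroup.eq_zero_iff (m • ((dT : ℚ)⁻¹))).mp h0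
      obtain ⟨j, hj⟩ := hmem
      have hj' : (j : ℚ) = (m : ℚ) * (dT : ℚ)⁻¹ := by
        simpa [nsmul_eq_mul] using hj
      have hq : (m : ℚ) = (j : ℚ) * (dT : ℚ) := by
        field_simp at hj'
        linarith
      have hz : (m : ℤ) = j * (dT : ℤ) := by
        exact_mod_cast hq
      have hdvd : (dT : ℤ) ∣ (m : ℤ) := ⟨j, by rw [hz]; ring⟩
      have := Int.le_of_dvd (by exact_mod_cast hmpos) hdvd
      omega
  -- index of ker φ
  have hidxφ : φ.ker.index = dT := by
    rw [AddSubgroup.index_eq_card,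
      Nat.card_congr (QuotientAddGroup.quotientKerEquivRange φ).toEquiv, hrangeφ,
      Nat.card_zmultiples, hordx₀]
  -- Nat.card SLW = Nat.card ker φ
  have hkercard : Nat.card φ.ker = Nat.card (SLW A) := by
    apply Nat.card_congr
    refine ⟨fun y => ⟨y.1.1, AddSubgroup.mem_inf.mpr ⟨y.1.2, ?_⟩⟩,
      fun x => ⟨⟨x.1, (AddSubgroup.mem_inf.mp x.2).1⟩, ?_⟩, fun y => rfl, fun x => rfl⟩
    · exact AddMonoidHom.mem_ker.mpr (AddMonoidHom.mem_ker.mp y.2)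
    · exact AddMonoidHom.mem_ker.mpr (AddMonoidHom.mem_ker.mp (AddSubgroup.mem_inf.mp x.2).2)
  have hmain := AddSubgroup.card_mul_index φ.ker
  rw [hidxφ, hkercard, hcardAutW] at hmain
  exact (Nat.div_eq_of_eq_mul_left hdT hmain.symm).symm
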